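/- Let b ≥ 2 and c ≥ 2 be integers, and suppose there exist positive integers n and m such that b^n = c^m. Then there exists a probability space and a random variable X on it such that X is both base-b Benford and base-c Benford. -/
import Mathlib


open MeasureTheory

open Set in
/-- Multiplication by a nonzero natural followed by taking the fractional part
preserves Lebesgue measure on `[0,1)`. -/
lemma map_fract_nat_mul (k : ℕ) (hk : k ≠ 0) :
    Measure.map (fun ω : ℝ => Int.fract ((k : ℝ) * ω)) (volume.restrict (Ico (0 : ℝ) 1))
      = volume.restrict (Ico (0 : ℝ) 1) := by
  haveI : Fact ((0 : ℝ) < 1) := ⟨zero_lt_one⟩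
  have h01 : volume.restrict (Ico (0 : ℝ) 1) = volume.restrict (Ioc (0 : ℝ) 1) :=
    Measure.restrict_congr_set Ico_ae_eq_Ioc
  have hmk : MeasurePreserving (fun x : ℝ => (x : AddCircle (1 : ℝ)))
      (volume.restrict (Ioc (0 : ℝ) 1)) volume := by
    simpa using AddCircle.measurePreserving_mk (1 : ℝ) 0
  have hsmul : MeasurePreserving (fun y : AddCircle (1 : ℝ) => (k : ℤ) • y) volume volume :=
    Measure.measurePreserving_zsmul volume (by exact_mod_cast hk)
  set g : AddCircle (1 : ℝ) → ℝ := fun y => (AddCircle.equivIco 1 0 y : ℝ) with hgdef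
  have hg : Measurable g := by
    exact measurable_subtype_coe.comp (AddCircle.measurableEquivIco (1 : ℝ) 0).measurable
  have hgmk : ∀ x : ℝ, g ((x : AddCircle (1 : ℝ))) = Int.fract x := by
    intro x
    simp [hgdef, AddCircle.coe_equivIco_mk_apply]
  have hcomp : (fun ω : ℝ => Int.fract ((k : ℝ) * ω))
      = g ∘ (fun y : AddCircle (1 : ℝ) => (k : ℤ) • y) ∘ (fun x : ℝ => (x : AddCircle (1 : ℝ))) := by
    funext x
    have h1 : (k : ℤ) • ((x : ℝ) : AddCircle (1 : ℝ)) = (((k : ℝ) * x : ℝ) : AddCircle (1 : ℝ)) := by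
      rw [← QuotientAddGroup.mk_zsmul]
      norm_num [zsmul_eq_mul]
    show Int.fract ((k : ℝ) * x) = g ((k : ℤ) • ((x : ℝ) : AddCircle (1 : ℝ)))
    rw [h1, hgmk]
  have hgvol : Measure.map g volume = volume.restrict (Ico (0 : ℝ) 1) := by
    rw [← hmk.map_eq, Measure.map_map hg hmk.measurable]
    have : g ∘ (fun x : ℝ => (x : AddCircle (1 : ℝ))) = Int.fract := funext hgmk
    rw [this, ← h01]
    have hae : Int.fract =ᵐ[volume.restrict (Ico (0 : ℝ) 1)] id := by
      filter_upwards [ae_restrict_mem measurableSet_Ico] with x hx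
      exact Int.fract_eq_self.mpr ⟨hx.1, hx.2⟩
    rw [Measure.map_congr hae, Measure.map_id]
  rw [h01, hcomp, ← Measure.map_map hg (hsmul.measurable.comp hmk.measurable),
    ← Measure.map_map hsmul.measurable hmk.measurable, hmk.map_eq, hsmul.map_eq, hgvol]
  exact h01

/-- If `b^n = c^m` for some positive integers `n, m`, then there is a random
variable that is simultaneously base-`b` Benford and base-`c` Benford. -/
theorem exists_benford_two_bases_of_common_power
    (b c : ℕ) (hb : 2 ≤ b) (hc : 2 ≤ c)
    (n m : ℕ) (hn : 0 < n) (hm : 0 < m) (hpow : b ^ n = c ^ m) :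
    ∃ (Ω : Type) (_ : MeasurableSpace Ω) (ℙ : Measure Ω) (_ : IsProbabilityMeasure ℙ)
      (X : Ω → ℝ), Measurable X ∧
      ℙ {ω | 0 < X ω} = 1 ∧
      Measure.map (fun ω => Int.fract (Real.logb b (X ω))) ℙ
        = volume.restrict (Set.Ico (0 : ℝ) 1) ∧
      Measure.map (fun ω => Int.fract (Real.logb c (X ω))) ℙ
        = volume.restrict (Set.Ico (0 : ℝ) 1) := by
  refine ⟨ℝ, inferInstance, volume.restrict (Set.Ico (0 : ℝ) 1), ?_,
    fun ω => ((b : ℝ) ^ n : ℝ) ^ ω, ?_, ?_, ?_, ?_⟩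
  · constructor
    simp [Real.volume_Ico]
  · exact (continuous_const.rpow continuous_id fun x => Or.inl (by positivity)).measurable
  · have : ∀ ω : ℝ, (0 : ℝ) < ((b : ℝ) ^ n : ℝ) ^ ω := fun ω =>
      Real.rpow_pos_of_pos (by positivity) _
    simp only [this, Set.setOf_true]
    simp [Real.volume_Ico]
  · have hb1 : (1 : ℝ) < (b : ℝ) := by exact_mod_cast hb.trans_lt' one_lt_two
    have hlog : ∀ ω : ℝ, Real.logb b (((b : ℝ) ^ n : ℝ) ^ ω) = (n : ℝ) * ω := by
      intro ω
      rw [← Real.rpow_natCast (b : ℝ) n, ← Real.rpow_mul (by positivity),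
        Real.logb_rpow (by positivity) (by linarith)]
    simp only [hlog]
    exact map_fract_nat_mul n hn.ne'
  · have hc1 : (1 : ℝ) < (c : ℝ) := by exact_mod_cast hc.trans_lt' one_lt_two
    have hbc : ((b : ℝ) ^ n : ℝ) = ((c : ℝ) ^ m : ℝ) := by exact_mod_cast hpow
    have hlog : ∀ ω : ℝ, Real.logb c (((b : ℝ) ^ n : ℝ) ^ ω) = (m : ℝ) * ω := by
      intro ω
      rw [hbc, ← Real.rpow_natCast (c : ℝ) m, ← Real.rpow_mul (by positivity),
        Real.logb_rpow (by positivity) (by linarith)]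
    simp only [hlog]
    exact map_fract_nat_mul m hm.ne'
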